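/- Let χ be a Dirichlet character modulo q induced by the primitive character ψ of conductor q₁, and write q₂ for the product of primes dividing q but not q₁. For 1/2 ≤ σ ≤ 3/4 and real t, the ratio ρ = Π_{p | q, p ∤ q₁} |1 - χ₁(p) p^{-σ-it}| / |1 - χ₁(p) p^{σ-1-it}| (with χ₁ = ψ) satisfies log ρ ≤ (2σ-1) Σ_{p | q, p ∤ q₁} (log p)/(p^{1-σ} - 1). -/

import Mathlib

open Complex Finset

private lemma key_prime_bound (p : ℕ) (hp : p.Prime) (z : ℂ) (hz : ‖z‖ ≤ 1)
    (σ t : ℝ) (hσ1 : 1 / 2 ≤ σ) (hσ2 : σ ≤ 3 / 4) :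
    Real.log (‖1 - z * (p : ℂ) ^ (-(σ : ℂ) - t * Complex.I)‖ /
        ‖1 - z * (p : ℂ) ^ ((σ : ℂ) - 1 - t * Complex.I)‖)
      ≤ (2 * σ - 1) * (Real.log p / ((p : ℝ) ^ (1 - σ) - 1)) := by
  have hp1 : (1 : ℝ) < p := by exact_mod_cast hp.one_lt
  have hp0 : (0 : ℝ) < p := by linarith
  have hpc : (p : ℂ) ≠ 0 := by exact_mod_cast hp.pos.ne'
  set w : ℂ := z * (p : ℂ) ^ ((σ : ℂ) - 1 - t * Complex.I) with hw
  have hre : ((σ : ℂ) - 1 - t * Complex.I).re = σ - 1 := by simp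
  have hcast : ((p : ℕ) : ℂ) = (((p : ℝ)) : ℂ) := by norm_cast
  have habs : ‖(p : ℂ) ^ ((σ : ℂ) - 1 - t * Complex.I)‖ = (p : ℝ) ^ (σ - 1) := by
    rw [hcast, Complex.norm_cpow_eq_rpow_re_of_pos hp0, hre]
  have hwnorm : ‖w‖ ≤ (p : ℝ) ^ (σ - 1) := by
    rw [hw, norm_mul, habs]
    calc ‖z‖ * (p : ℝ) ^ (σ - 1) ≤ 1 * (p : ℝ) ^ (σ - 1) :=
          mul_le_mul_of_nonneg_right hz (Real.rpow_nonneg hp0.le _)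
      _ = (p : ℝ) ^ (σ - 1) := one_mul _
  set c : ℝ := (p : ℝ) ^ (1 - 2 * σ) with hc
  have hc0 : 0 < c := Real.rpow_pos_of_pos hp0 _
  have hc1 : c ≤ 1 := Real.rpow_le_one_of_one_le_of_nonpos hp1.le (by linarith)
  have hfac : z * (p : ℂ) ^ (-(σ : ℂ) - t * Complex.I) = w * (c : ℂ) := by
    have h1 : (-(σ : ℂ) - t * Complex.I)
        = ((σ : ℂ) - 1 - t * Complex.I) + ((1 - 2 * σ : ℝ) : ℂ) := by push_cast; ring
    rw [h1, Complex.cpow_add _ _ hpc, hw, hc, Complex.ofReal_cpow hp0.le, hcast]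
    push_cast
    ring
  set A : ℝ := ‖1 - z * (p : ℂ) ^ (-(σ : ℂ) - t * Complex.I)‖ with hA
  set B : ℝ := ‖1 - w‖ with hB
  have hps1 : (p : ℝ) ^ (σ - 1) < 1 :=
    Real.rpow_lt_one_of_one_lt_of_neg hp1 (by linarith)
  have hbpos : (0 : ℝ) < 1 - (p : ℝ) ^ (σ - 1) := by linarith
  have hBge : 1 - (p : ℝ) ^ (σ - 1) ≤ B := by
    calc 1 - (p : ℝ) ^ (σ - 1) ≤ ‖(1 : ℂ)‖ - ‖w‖ := by rw [norm_one]; linarith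
      _ ≤ ‖1 - w‖ := norm_sub_norm_le _ _
      _ = B := rfl
  have hBpos : 0 < B := lt_of_lt_of_le hbpos hBge
  set d : ℝ := (p : ℝ) ^ (σ - 1) * (1 - c) with hd
  have hd0 : 0 ≤ d := mul_nonneg (Real.rpow_nonneg hp0.le _) (by linarith)
  have hAle : A ≤ B + d := by
    have hsplit : (1 : ℂ) - w * (c : ℂ) = (1 - w) + w * (1 - (c : ℂ)) := by ring
    rw [hA, hfac, hsplit]
    calc ‖(1 - w) + w * (1 - (c : ℂ))‖
        ≤ ‖1 - w‖ + ‖w * (1 - (c : ℂ))‖ := norm_add_le _ _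
      _ ≤ B + d := by
          rw [hB, norm_mul]
          have h2 : ‖1 - (c : ℂ)‖ = 1 - c := by
            rw [show (1 : ℂ) - (c : ℂ) = ((1 - c : ℝ) : ℂ) by push_cast; ring,
              Complex.norm_real, Real.norm_eq_abs, _root_.abs_of_nonneg (by linarith : (0:ℝ) ≤ 1 - c)]
          rw [h2]
          have : ‖w‖ * (1 - c) ≤ (p : ℝ) ^ (σ - 1) * (1 - c) :=
            mul_le_mul_of_nonneg_right hwnorm (by linarith)
          linarith
  have hApos : 0 < A := by
    rw [hA, hfac]
    have hwc : ‖w * (c : ℂ)‖ < 1 := by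
      rw [norm_mul, Complex.norm_real, Real.norm_eq_abs, _root_.abs_of_nonneg hc0.le]
      calc ‖w‖ * c ≤ (p : ℝ) ^ (σ - 1) * 1 :=
            mul_le_mul hwnorm hc1 hc0.le (Real.rpow_nonneg hp0.le _)
        _ < 1 := by rw [mul_one]; exact hps1
    have h3 := norm_sub_norm_le (1 : ℂ) (w * (c : ℂ))
    rw [norm_one] at h3
    have : 0 < ‖(1 : ℂ) - w * (c : ℂ)‖ := by linarith
    exact this
  -- the ratio bound
  have hratio : A / B ≤ 1 + d / (1 - (p : ℝ) ^ (σ - 1)) := by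
    have h1 : A / B ≤ (B + d) / B := by gcongr
    have h2 : (B + d) / B = 1 + d / B := by field_simp
    have h3 : d / B ≤ d / (1 - (p : ℝ) ^ (σ - 1)) := by gcongr
    linarith
  set P : ℝ := (p : ℝ) ^ (1 - σ) with hP
  have hP1 : 1 < P := Real.one_lt_rpow_iff_of_pos hp0 |>.mpr (Or.inl ⟨hp1, by linarith⟩)
  have hPinv : (p : ℝ) ^ (σ - 1) = P⁻¹ := by
    rw [hP, ← Real.rpow_neg hp0.le]; congr 1; ring
  have hdb : d / (1 - (p : ℝ) ^ (σ - 1)) = (1 - c) / (P - 1) := by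
    rw [hd, hPinv]
    have hPpos : (0 : ℝ) < P := by linarith
    field_simp
  have h1c : 1 - c ≤ (2 * σ - 1) * Real.log p := by
    have hdef : c = Real.exp (Real.log p * (1 - 2 * σ)) := by
      rw [hc, Real.rpow_def_of_pos hp0]
    have := Real.add_one_le_exp (Real.log p * (1 - 2 * σ))
    rw [← hdef] at this
    nlinarith [this]
  have hfinal : d / (1 - (p : ℝ) ^ (σ - 1)) ≤ (2 * σ - 1) * (Real.log p / (P - 1)) := by
    rw [hdb, mul_div_assoc']
    gcongr
  have hq0 : 0 ≤ d / (1 - (p : ℝ) ^ (σ - 1)) := div_nonneg hd0 hbpos.le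
  calc Real.log (A / B) ≤ Real.log (1 + d / (1 - (p : ℝ) ^ (σ - 1))) := by
        apply Real.log_le_log (div_pos hApos hBpos) hratio
    _ ≤ d / (1 - (p : ℝ) ^ (σ - 1)) := by
        have := Real.log_le_sub_one_of_pos (x := 1 + d / (1 - (p : ℝ) ^ (σ - 1))) (by linarith)
        linarith
    _ ≤ (2 * σ - 1) * (Real.log p / (P - 1)) := hfinal

private lemma aux_pos (p : ℕ) (hp : p.Prime) (z : ℂ) (hz : ‖z‖ ≤ 1) (c : ℂ) (hcre : c.re < 0) :
    0 < ‖1 - z * (p : ℂ) ^ c‖ := by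
  have hp1 : (1 : ℝ) < p := by exact_mod_cast hp.one_lt
  have hp0 : (0 : ℝ) < p := by linarith
  have hlt : ‖z * (p : ℂ) ^ c‖ < 1 := by
    rw [norm_mul]
    have h1 : ‖(p : ℂ) ^ c‖ = (p : ℝ) ^ c.re := by
      rw [show ((p : ℕ) : ℂ) = (((p : ℝ)) : ℂ) by norm_cast,
        Complex.norm_cpow_eq_rpow_re_of_pos hp0]
    rw [h1]
    calc ‖z‖ * (p : ℝ) ^ c.re ≤ 1 * (p : ℝ) ^ c.re :=
          mul_le_mul_of_nonneg_right hz (Real.rpow_nonneg hp0.le _)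
      _ = (p : ℝ) ^ c.re := one_mul _
      _ < 1 := Real.rpow_lt_one_of_one_lt_of_neg hp1 hcre
  have h2 := norm_sub_norm_le (1 : ℂ) (z * (p : ℂ) ^ c)
  rw [norm_one] at h2
  have : 0 < ‖(1 : ℂ) - z * (p : ℂ) ^ c‖ := by linarith
  exact this

theorem log_rho_bound (q q₁ : ℕ) (hq₁ : q₁ ∣ q)
    (ψ : DirichletCharacter ℂ q₁) (hψ : ψ.IsPrimitive)
    (σ t : ℝ) (hσ1 : 1 / 2 ≤ σ) (hσ2 : σ ≤ 3 / 4) :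
    Real.log (∏ p ∈ q.primeFactors \ q₁.primeFactors,
        ‖1 - ψ (p : ZMod q₁) * (p : ℂ) ^ (-(σ : ℂ) - t * Complex.I)‖ /
          ‖1 - ψ (p : ZMod q₁) * (p : ℂ) ^ ((σ : ℂ) - 1 - t * Complex.I)‖)
      ≤ (2 * σ - 1) *
        ∑ p ∈ q.primeFactors \ q₁.primeFactors,
          Real.log p / ((p : ℝ) ^ (1 - σ) - 1) := by
  have hterm : ∀ p ∈ q.primeFactors \ q₁.primeFactors,
      ‖1 - ψ (p : ZMod q₁) * (p : ℂ) ^ (-(σ : ℂ) - t * Complex.I)‖ /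
        ‖1 - ψ (p : ZMod q₁) * (p : ℂ) ^ ((σ : ℂ) - 1 - t * Complex.I)‖ ≠ 0 := by
    intro p hps
    have hp : p.Prime := Nat.prime_of_mem_primeFactors (Finset.mem_sdiff.mp hps).1
    have h1 : 0 < ‖1 - ψ (p : ZMod q₁) * (p : ℂ) ^ (-(σ : ℂ) - t * Complex.I)‖ :=
      aux_pos p hp _ (ψ.norm_le_one _) _ (by simp; linarith)
    have h2 : 0 < ‖1 - ψ (p : ZMod q₁) * (p : ℂ) ^ ((σ : ℂ) - 1 - t * Complex.I)‖ :=
      aux_pos p hp _ (ψ.norm_le_one _) _ (by simp; linarith)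
    exact (div_pos h1 h2).ne'
  rw [Real.log_prod hterm, Finset.mul_sum]
  refine Finset.sum_le_sum ?_
  intro p hps
  have hp : p.Prime := Nat.prime_of_mem_primeFactors (Finset.mem_sdiff.mp hps).1
  exact key_prime_bound p hp _ (ψ.norm_le_one _) σ t hσ1 hσ2
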